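/- Let x₀ ∈ ℝⁿ and let f(y) = |y−x₀|^{(αs−n)/(s−1)}. Then for every integer m ≥ 1 and every x ∈ ℝⁿ with x ≠ x₀, 𝒩^m(f)(x) ≥ (3/2)^{(αs−n)/(s−1)} · (1/m!) · |x−x₀|^{(αs−n)/(s−1)} · ( ∫_0^{|x−x₀|} (σ(B(x,r/2))/r^{n−αs})^{1/(s−1)} dr/r )^m. -/

import Mathlib

open MeasureTheory Metric Set Filter
open scoped ENNReal NNReal Topology

noncomputable section

/-- `n`-dimensional Euclidean space. -/
abbrev En (n : ℕ) : Type := EuclideanSpace ℝ (Fin n)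

/-- The truncated Wolff potential
`W^ρ_{α,s} μ (x) = ∫_0^ρ (μ(B(x,r))/r^{n-αs})^{1/(s-1)} dr/r`. -/
noncomputable def wolffT (n : ℕ) (α s : ℝ) (μ : Measure (En n)) (ρ : ℝ) (x : En n) : ℝ≥0∞ :=
  ∫⁻ r in Set.Ioo (0:ℝ) ρ,
    (μ (Metric.ball x r) / ENNReal.ofReal (r ^ ((n:ℝ) - α * s))) ^ (1/(s-1))
      * ENNReal.ofReal r⁻¹

/-- The (full) Wolff potential
`W_{α,s} μ (x) = ∫_0^∞ (μ(B(x,r))/r^{n-αs})^{1/(s-1)} dr/r`. -/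
noncomputable def wolff (n : ℕ) (α s : ℝ) (μ : Measure (En n)) (x : En n) : ℝ≥0∞ :=
  ∫⁻ r in Set.Ioi (0:ℝ),
    (μ (Metric.ball x r) / ENNReal.ofReal (r ^ ((n:ℝ) - α * s))) ^ (1/(s-1))
      * ENNReal.ofReal r⁻¹

/-- The truncated Riesz-type potential
`I^ρ μ (x) = ∫_0^ρ (μ(B(x,r))/r^{n-αs}) dr/r`. -/
noncomputable def rieszT (n : ℕ) (α s : ℝ) (μ : Measure (En n)) (ρ : ℝ) (x : En n) : ℝ≥0∞ :=
  ∫⁻ r in Set.Ioo (0:ℝ) ρ,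
    (μ (Metric.ball x r) / ENNReal.ofReal (r ^ ((n:ℝ) - α * s))) * ENNReal.ofReal r⁻¹

/-- The nonlinear operator `𝒩 f (x) = W_{α,s}(f^{s-1} dσ)(x)`. -/
noncomputable def Nop (n : ℕ) (α s : ℝ) (σ : Measure (En n)) (f : En n → ℝ≥0∞) (x : En n) :
    ℝ≥0∞ :=
  ∫⁻ r in Set.Ioi (0:ℝ),
    (ENNReal.ofReal (r ^ (α * s - (n:ℝ))) * ∫⁻ y in Metric.ball x r, (f y) ^ (s-1) ∂σ)
        ^ (1/(s-1))
      * ENNReal.ofReal r⁻¹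

/-- The Riesz potential `I_α f (x) = (n-α)⁻¹ ∫ f(y) |x-y|^{α-n} dy`. -/
noncomputable def rieszPot (n : ℕ) (α : ℝ) (f : En n → ℝ≥0∞) (x : En n) : ℝ≥0∞ :=
  ENNReal.ofReal (((n:ℝ) - α)⁻¹) * ∫⁻ y, f y * ENNReal.ofReal (‖x - y‖ ^ (α - (n:ℝ)))

/-- The Riesz capacity `cap_{α,s}(A) = inf { ∫ f^s : f ≥ 0, I_α f ≥ 1 on A }`. -/
noncomputable def rieszCap (n : ℕ) (α s : ℝ) (A : Set (En n)) : ℝ≥0∞ :=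
  ⨅ (f : En n → ℝ≥0∞) (_ : Measurable f) (_ : ∀ x ∈ A, 1 ≤ rieszPot n α f x),
    ∫⁻ y, (f y) ^ s

/-- Extended exponential: `eexp x = exp x` for finite `x`, with `eexp ∞ = ∞`. -/
noncomputable def eexp (x : ℝ≥0∞) : ℝ≥0∞ :=
  if x = ∞ then ∞ else ENNReal.ofReal (Real.exp x.toReal)

lemma vol_aux (X : ℝ≥0∞) : MeasureTheory.volume {l : ℝ | 0 < l ∧ ENNReal.ofReal l < X} = X := by
  rcases eq_or_ne X ⊤ with h | h
  · have h2 : {l : ℝ | 0 < l ∧ ENNReal.ofReal l < X} = Set.Ioi (0:ℝ) := by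
      ext l
      simp [h, Set.mem_Ioi, ENNReal.ofReal_lt_top]
    rw [h2, Real.volume_Ioi, h]
  · have h2 : {l : ℝ | 0 < l ∧ ENNReal.ofReal l < X} = Set.Ioo 0 X.toReal := by
      ext l
      constructor
      · rintro ⟨h0, hl⟩
        exact ⟨h0, (ENNReal.ofReal_lt_iff_lt_toReal h0.le h).1 hl⟩
      · rintro ⟨h0, hl⟩
        exact ⟨h0, (ENNReal.ofReal_lt_iff_lt_toReal h0.le h).2 hl⟩
    rw [h2, Real.volume_Ioo, sub_zero, ENNReal.ofReal_toReal h]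

lemma key_calc (g : ℝ → ℝ≥0∞) (hg : Measurable g) (a b : ℝ) (m : ℕ) (hm : m ≠ 0) :
    (∫⁻ ρ in Set.Ioo a b, g ρ) ^ (m + 1)
      ≤ (((m : ℕ) : ℝ≥0∞) + 1) * ∫⁻ ρ in Set.Ioo a b, (∫⁻ u in Set.Ioo ρ b, g u) ^ m * g ρ := by
  have hmR : (0:ℝ) < m := by exact_mod_cast Nat.pos_of_ne_zero hm
  have hmR' : ((m:ℝ)) ≠ 0 := ne_of_gt hmR
  set ν : Measure ℝ := volume.withDensity g with hν
  have hνap : ∀ s : Set ℝ, MeasurableSet s → ν s = ∫⁻ ρ in s, g ρ := fun s hs =>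
    withDensity_apply g hs
  set φ : ℝ → ℝ≥0∞ := fun u => ν (Set.Ioo u b) with hφ
  have hφa : Antitone φ := fun u v huv => measure_mono (Set.Ioo_subset_Ioo_left huv)
  have hφm : Measurable φ := hφa.measurable
  set T : ℝ≥0∞ := φ a with hT
  have hTdef : (∫⁻ ρ in Set.Ioo a b, g ρ) = T := (hνap _ measurableSet_Ioo).symm
  have hrw : (∫⁻ ρ in Set.Ioo a b, (∫⁻ u in Set.Ioo ρ b, g u) ^ m * g ρ)
      = ∫⁻ ρ in Set.Ioo a b, (φ ρ) ^ m * g ρ := by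
    refine lintegral_congr fun ρ => ?_
    have e : (∫⁻ u in Set.Ioo ρ b, g u) = φ ρ := (hνap _ measurableSet_Ioo).symm
    rw [e]
  rw [hTdef, hrw]
  clear hTdef hrw
  -- superlevel sets
  set U : ℝ → Set ℝ := fun l => {ρ : ℝ | ρ ∈ Set.Ioo a b ∧ ENNReal.ofReal l < (φ ρ) ^ m}
    with hU
  have hUm : ∀ l, MeasurableSet (U l) := by
    intro l
    have : U l = Set.Ioo a b ∩ {ρ : ℝ | ENNReal.ofReal l < (φ ρ) ^ m} := rfl
    rw [this]
    exact measurableSet_Ioo.inter (measurableSet_lt measurable_const (hφm.pow_const m))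
  -- Fubini / layer cake
  have hswap : (∫⁻ ρ in Set.Ioo a b, (φ ρ) ^ m * g ρ) = ∫⁻ l in Set.Ioi (0:ℝ), ν (U l) := by
    classical
    set S : Set (ℝ × ℝ) :=
      {p : ℝ × ℝ | p.1 ∈ Set.Ioo a b ∧ (0 < p.2 ∧ ENNReal.ofReal p.2 < (φ p.1) ^ m)} with hS
    have hSm : MeasurableSet S := by
      have hSeq : S = (Prod.fst ⁻¹' Set.Ioo a b) ∩ ((Prod.snd ⁻¹' Set.Ioi (0:ℝ)) ∩
          {p : ℝ × ℝ | ENNReal.ofReal p.2 < (φ p.1) ^ m}) := rfl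
      rw [hSeq]
      refine (measurable_fst measurableSet_Ioo).inter
        ((measurable_snd measurableSet_Ioi).inter ?_)
      exact measurableSet_lt (measurable_snd.ennreal_ofReal)
        (((hφm.comp measurable_fst)).pow_const m)
    set W : ℝ → ℝ → ℝ≥0∞ := fun ρ l => S.indicator (fun p => g p.1) (ρ, l) with hW
    have hWm : Measurable (Function.uncurry W) := by
      have h : Function.uncurry W = S.indicator (fun p : ℝ × ℝ => g p.1) := rfl
      rw [h]
      exact (hg.comp measurable_fst).indicator hSm
    have hWval : ∀ ρ l, W ρ l
        = if (ρ ∈ Set.Ioo a b ∧ 0 < l ∧ ENNReal.ofReal l < (φ ρ) ^ m) then g ρ else 0 := by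
      intro ρ l
      simp only [hW, hS, Set.indicator_apply, Set.mem_setOf_eq]
    have hinner1 : ∀ ρ ∈ Set.Ioo a b, (∫⁻ l, W ρ l) = (φ ρ) ^ m * g ρ := by
      intro ρ hρ
      have hms : MeasurableSet {l : ℝ | 0 < l ∧ ENNReal.ofReal l < (φ ρ) ^ m} := by
        have h : {l : ℝ | 0 < l ∧ ENNReal.ofReal l < (φ ρ) ^ m}
            = Set.Ioi (0:ℝ) ∩ (fun l : ℝ => ENNReal.ofReal l) ⁻¹' Set.Iio ((φ ρ) ^ m) := rfl
        rw [h]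
        exact measurableSet_Ioi.inter (ENNReal.measurable_ofReal measurableSet_Iio)
      have h1 : ∀ l : ℝ, W ρ l
          = ({l : ℝ | 0 < l ∧ ENNReal.ofReal l < (φ ρ) ^ m}).indicator (fun _ => g ρ) l := by
        intro l
        rw [hWval, Set.indicator_apply]
        simp only [Set.mem_setOf_eq]
        by_cases hl : 0 < l ∧ ENNReal.ofReal l < (φ ρ) ^ m
        · rw [if_pos ⟨hρ, hl⟩, if_pos hl]
        · rw [if_neg (fun hc => hl hc.2), if_neg hl]
      rw [lintegral_congr h1, lintegral_indicator_const hms, vol_aux, mul_comm]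
    have hinner0 : ∀ ρ, ρ ∉ Set.Ioo a b → ∀ l, W ρ l = 0 := by
      intro ρ hρ l
      rw [hWval, if_neg (fun hc => hρ hc.1)]
    have hleft : (∫⁻ ρ in Set.Ioo a b, (φ ρ) ^ m * g ρ) = ∫⁻ ρ, ∫⁻ l, W ρ l := by
      rw [← lintegral_indicator measurableSet_Ioo]
      refine lintegral_congr fun ρ => ?_
      rw [Set.indicator_apply]
      by_cases hρ : ρ ∈ Set.Ioo a b
      · rw [if_pos hρ, (hinner1 ρ hρ)]
      · rw [if_neg hρ]
        simp [hinner0 ρ hρ]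
    have hright : (∫⁻ l, ∫⁻ ρ, W ρ l) = ∫⁻ l in Set.Ioi (0:ℝ), ν (U l) := by
      rw [← lintegral_indicator measurableSet_Ioi]
      refine lintegral_congr fun l => ?_
      rw [Set.indicator_apply]
      by_cases hl : l ∈ Set.Ioi (0:ℝ)
      · rw [if_pos hl]
        have hl' : 0 < l := hl
        have h1 : ∀ ρ, W ρ l = (U l).indicator g ρ := by
          intro ρ
          rw [hWval, Set.indicator_apply]
          by_cases hρ : ρ ∈ Set.Ioo a b ∧ ENNReal.ofReal l < (φ ρ) ^ m
          · rw [if_pos ⟨hρ.1, hl', hρ.2⟩, if_pos (show ρ ∈ U l from hρ)]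
          · rw [if_neg (fun hc => hρ ⟨hc.1, hc.2.2⟩),
              if_neg (show ρ ∉ U l from fun hc => hρ hc)]
        rw [lintegral_congr h1, lintegral_indicator (hUm l), hνap _ (hUm l)]
      · rw [if_neg hl]
        have h1 : ∀ ρ, W ρ l = 0 := fun ρ => by
          rw [hWval, if_neg (fun hc => hl hc.2.1)]
        simp [h1]
    rw [hleft, lintegral_lintegral_swap hWm.aemeasurable, hright]
  -- continuity from below for ν on Ioo
  have hsupIoo : ∀ c d : ℝ, c < d →
      ν (Set.Ioo c d) = ⨆ k : ℕ, ν (Set.Ioo (c + (d - c)/(k + 2)) d) := by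
    intro c d hcd
    have hun : (⋃ k : ℕ, Set.Ioo (c + (d - c)/((k:ℝ) + 2)) d) = Set.Ioo c d := by
      apply Set.Subset.antisymm
      · refine Set.iUnion_subset fun k => Set.Ioo_subset_Ioo_left ?_
        have : 0 < (d - c)/((k:ℝ) + 2) := by
          apply div_pos (by linarith)
          positivity
        linarith
      · intro ρ hρ
        have h1 : 0 < ρ - c := by linarith [hρ.1]
        obtain ⟨k, hk⟩ := exists_nat_gt ((d - c)/(ρ - c))
        refine Set.mem_iUnion.2 ⟨k, ?_, hρ.2⟩
        have hk2 : (d - c)/((k:ℝ) + 2) < ρ - c := by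
          rw [div_lt_iff₀ (by positivity)]
          have h3 : (d - c)/(ρ - c) < (k:ℝ) + 2 := by linarith
          have h4 : d - c < ((k:ℝ) + 2) * (ρ - c) := by
            rw [div_lt_iff₀ h1] at h3
            linarith
          linarith
        linarith
    have hdir : Directed (· ⊆ ·) (fun k : ℕ => Set.Ioo (c + (d - c)/((k:ℝ) + 2)) d) := by
      refine Monotone.directed_le fun k k' hkk => Set.Ioo_subset_Ioo_left ?_
      have h5 : (d - c)/((k':ℝ) + 2) ≤ (d - c)/((k:ℝ) + 2) := by
        apply div_le_div_of_nonneg_left (by linarith) (by positivity)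
        exact_mod_cast by omega
      linarith
    rw [← hun, Directed.measure_iUnion hdir]
  -- pointwise lower bound for the layer measures
  have hpoint : ∀ l : ℝ, 0 < l → T ≤ ν (U l) + (ENNReal.ofReal l) ^ (1/(m:ℝ)) := by
    intro l hl
    set w : ℝ≥0∞ := (ENNReal.ofReal l) ^ (1/(m:ℝ)) with hw
    have hout : ∀ ρ, ρ ∈ Set.Ioo a b → ρ ∉ U l → φ ρ ≤ w := by
      intro ρ hρ hρU
      have h1 : (φ ρ) ^ m ≤ ENNReal.ofReal l := by
        by_contra hcon
        exact hρU ⟨hρ, not_le.1 hcon⟩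
      have h2 : ((φ ρ : ℝ≥0∞) ^ m) ^ (1/(m:ℝ)) ≤ w :=
        ENNReal.rpow_le_rpow h1 (by positivity)
      calc φ ρ = ((φ ρ) ^ m) ^ (1/(m:ℝ)) := by
            rw [← ENNReal.rpow_natCast (φ ρ) m, ← ENNReal.rpow_mul, mul_one_div,
              div_self hmR', ENNReal.rpow_one]
        _ ≤ w := h2
    rcases eq_or_ne T 0 with h0 | h0
    · rw [h0]; exact zero_le
    have hab : a < b := by
      by_contra hcon
      apply h0
      have h2 : Set.Ioo a b = ∅ := Set.Ioo_eq_empty hcon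
      show ν (Set.Ioo a b) = 0
      rw [h2]
      simp
    rcases Set.eq_empty_or_nonempty (U l) with hUe | hUe
    · have hTw : T ≤ w := by
        show ν (Set.Ioo a b) ≤ w
        rw [hsupIoo a b hab]
        refine iSup_le fun k => ?_
        have hpos : 0 < (b - a)/((k:ℝ) + 2) := by
          apply div_pos (by linarith)
          positivity
        have hlt : (b - a)/((k:ℝ) + 2) < b - a := by
          rw [div_lt_iff₀ (by positivity)]
          nlinarith
        have hmem : a + (b - a)/((k:ℝ) + 2) ∈ Set.Ioo a b := ⟨by linarith, by linarith⟩
        exact hout _ hmem (by simp [hUe])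
      exact hTw.trans (le_add_self)
    · set c := sSup (U l) with hc
      have hbdd : BddAbove (U l) := (bddAbove_Ioo (a := a) (b := b)).mono fun ρ hρ => hρ.1
      obtain ⟨u0, hu0⟩ := hUe
      have hac : a < c := lt_of_lt_of_le hu0.1.1 (le_csSup hbdd hu0)
      have hcb : c ≤ b := csSup_le ⟨u0, hu0⟩ fun u hu => hu.1.2.le
      have hsubU : Set.Ioo a c ⊆ U l := by
        intro ρ hρ
        obtain ⟨u, huU, hρu⟩ := exists_lt_of_lt_csSup ⟨u0, hu0⟩ hρ.2
        refine ⟨⟨hρ.1, hρu.trans huU.1.2⟩, ?_⟩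
        exact lt_of_lt_of_le huU.2 (pow_le_pow_left' (hφa hρu.le) m)
      have hν1 : ν (Set.Ioo a c) ≤ ν (U l) := measure_mono hsubU
      have hν2 : ν ({c} : Set ℝ) = 0 :=
        (withDensity_absolutelyContinuous volume g) (by simp)
      have hν3 : ν (Set.Ioo c b) ≤ w := by
        rcases le_or_gt b c with hbc | hcb'
        · rw [Set.Ioo_eq_empty (not_lt.2 hbc)]
          simp
        · rw [hsupIoo c b hcb']
          refine iSup_le fun k => ?_
          have hpos : 0 < (b - c)/((k:ℝ) + 2) := by
            apply div_pos (by linarith)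
            positivity
          have hlt : (b - c)/((k:ℝ) + 2) < b - c := by
            rw [div_lt_iff₀ (by positivity)]
            nlinarith
          have hckU : c + (b - c)/((k:ℝ) + 2) ∉ U l := by
            intro hmem
            have := le_csSup hbdd hmem
            rw [← hc] at this
            linarith
          exact hout _ ⟨by linarith, by linarith⟩ hckU
      have hcover : Set.Ioo a b ⊆ Set.Ioo a c ∪ ({c} ∪ Set.Ioo c b) := by
        intro ρ hρ
        rcases lt_trichotomy ρ c with h | h | h
        · exact Or.inl ⟨hρ.1, h⟩
        · exact Or.inr (Or.inl (by simp [h]))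
        · exact Or.inr (Or.inr ⟨h, hρ.2⟩)
      calc T ≤ ν (Set.Ioo a c ∪ ({c} ∪ Set.Ioo c b)) := measure_mono hcover
        _ ≤ ν (Set.Ioo a c) + ν ({c} ∪ Set.Ioo c b) := measure_union_le _ _
        _ ≤ ν (Set.Ioo a c) + (ν ({c} : Set ℝ) + ν (Set.Ioo c b)) := by
            gcongr
            exact measure_union_le _ _
        _ ≤ ν (U l) + (0 + w) := by
            gcongr
            rw [hν2]
        _ = ν (U l) + w := by rw [zero_add]
  -- lower bound the layer integral
  have hlow : (∫⁻ l in Set.Ioi (0:ℝ), (T - (ENNReal.ofReal l) ^ (1/(m:ℝ))))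
      ≤ ∫⁻ l in Set.Ioi (0:ℝ), ν (U l) := by
    refine setLIntegral_mono' measurableSet_Ioi fun l hl => ?_
    exact tsub_le_iff_right.2 (hpoint l hl)
  -- compute the explicit integral
  have hcalc : T ^ (m + 1)
      ≤ (((m : ℕ) : ℝ≥0∞) + 1) * ∫⁻ l in Set.Ioi (0:ℝ), (T - (ENNReal.ofReal l) ^ (1/(m:ℝ))) := by
    rcases eq_or_ne T 0 with h0 | h0
    · rw [h0]
      simp
    rcases eq_or_ne T ⊤ with htop | htop
    · have hinf : (∫⁻ l in Set.Ioi (0:ℝ), (T - (ENNReal.ofReal l) ^ (1/(m:ℝ)))) = ⊤ := by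
        apply eq_top_iff.2
        calc (⊤ : ℝ≥0∞) = (⊤ : ℝ≥0∞) * volume (Set.Ioi (0:ℝ)) := by
              rw [Real.volume_Ioi]
              simp
          _ = ∫⁻ _ in Set.Ioi (0:ℝ), (⊤:ℝ≥0∞) := (setLIntegral_const _ _).symm
          _ ≤ _ := by
              refine setLIntegral_mono' measurableSet_Ioi fun l hl => ?_
              have hfin : (ENNReal.ofReal l) ^ (1/(m:ℝ)) ≠ ⊤ :=
                ENNReal.rpow_ne_top_of_nonneg (by positivity) ENNReal.ofReal_ne_top
              rw [htop]
              rw [ENNReal.top_sub hfin]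
      rw [hinf, htop]
      rw [ENNReal.mul_top (zero_lt_one.trans_le le_add_self).ne']
      exact le_top
    · set t := T.toReal with htr
      have ht : 0 < t := ENNReal.toReal_pos h0 htop
      set c : ℝ := t ^ m with hcdef
      have hc : 0 < c := pow_pos ht m
      have hct : c ^ (1/(m:ℝ)) = t := by
        rw [hcdef, ← Real.rpow_natCast t m, ← Real.rpow_mul ht.le, mul_one_div,
          div_self hmR', Real.rpow_one]
      have hre : ∀ l ∈ Set.Ioo (0:ℝ) c,
          (T - (ENNReal.ofReal l) ^ (1/(m:ℝ))) = ENNReal.ofReal (t - l ^ (1/(m:ℝ))) := by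
        intro l hl
        rw [ENNReal.ofReal_rpow_of_pos hl.1, ← ENNReal.ofReal_toReal htop, ← htr,
          ← ENNReal.ofReal_sub _ (Real.rpow_nonneg hl.1.le _)]
      have h1m : (-1:ℝ) < 1/(m:ℝ) := by
        have h2 : (0:ℝ) < 1/(m:ℝ) := by positivity
        linarith
      have hii0 : IntervalIntegrable (fun l : ℝ => l ^ (1/(m:ℝ))) volume 0 c :=
        intervalIntegral.intervalIntegrable_rpow' h1m
      have hii : IntervalIntegrable (fun l : ℝ => t - l ^ (1/(m:ℝ))) volume 0 c :=
        (intervalIntegrable_const).sub hii0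
      have hint : IntegrableOn (fun l : ℝ => t - l ^ (1/(m:ℝ))) (Set.Ioo 0 c) volume :=
        (hii.1).mono_set Set.Ioo_subset_Ioc_self
      have hnn : ∀ l ∈ Set.Ioo (0:ℝ) c, 0 ≤ t - l ^ (1/(m:ℝ)) := by
        intro l hl
        have h2 : l ^ (1/(m:ℝ)) ≤ c ^ (1/(m:ℝ)) :=
          Real.rpow_le_rpow hl.1.le hl.2.le (by positivity)
        rw [hct] at h2
        linarith
      have hIoo : (∫⁻ l in Set.Ioo (0:ℝ) c, (T - (ENNReal.ofReal l) ^ (1/(m:ℝ))))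
          = ENNReal.ofReal (∫ l in Set.Ioo (0:ℝ) c, (t - l ^ (1/(m:ℝ)))) := by
        rw [setLIntegral_congr_fun measurableSet_Ioo hre]
        rw [← ofReal_integral_eq_lintegral_ofReal hint]
        exact (ae_restrict_iff' measurableSet_Ioo).2 (ae_of_all _ hnn)
      have hval : (∫ l in Set.Ioo (0:ℝ) c, (t - l ^ (1/(m:ℝ)))) = t ^ (m+1) / ((m:ℝ)+1) := by
        rw [← MeasureTheory.integral_Ioc_eq_integral_Ioo,
          ← intervalIntegral.integral_of_le hc.le]
        rw [intervalIntegral.integral_sub intervalIntegrable_const hii0]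
        rw [intervalIntegral.integral_const, integral_rpow (Or.inl h1m)]
        rw [Real.zero_rpow (by positivity : (0:ℝ) < 1/(m:ℝ) + 1).ne']
        have hcr : c ^ ((1:ℝ)/(m:ℝ) + 1) = t ^ (m+1) := by
          rw [hcdef, ← Real.rpow_natCast t m, ← Real.rpow_mul ht.le,
            ← Real.rpow_natCast t (m+1)]
          congr 1
          push_cast
          field_simp
          ring
        rw [hcr]
        rw [smul_eq_mul, sub_zero, hcdef]
        have : (t:ℝ) ^ m * t = t ^ (m+1) := by ring
        rw [sub_zero, this]
        field_simp
        ring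
      have hfinal : ENNReal.ofReal (t ^ (m+1) / ((m:ℝ)+1))
          ≤ ∫⁻ l in Set.Ioi (0:ℝ), (T - (ENNReal.ofReal l) ^ (1/(m:ℝ))) := by
        rw [← hval, ← hIoo]
        exact lintegral_mono_set Set.Ioo_subset_Ioi_self
      calc T ^ (m+1) = ENNReal.ofReal (t ^ (m+1)) := by
            rw [ENNReal.ofReal_pow ht.le, htr, ENNReal.ofReal_toReal htop]
        _ = (((m : ℕ) : ℝ≥0∞) + 1) * ENNReal.ofReal (t ^ (m+1) / ((m:ℝ)+1)) := by
            have hmc : ((m : ℕ) : ℝ≥0∞) + 1 = ENNReal.ofReal ((m:ℝ)+1) := by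
              rw [ENNReal.ofReal_add (by positivity) zero_le_one]
              simp
            rw [hmc, ← ENNReal.ofReal_mul (by positivity)]
            congr 1
            field_simp
        _ ≤ _ := by
            exact mul_le_mul_right hfinal _
  calc T ^ (m+1) ≤ (((m : ℕ) : ℝ≥0∞) + 1)
        * ∫⁻ l in Set.Ioi (0:ℝ), (T - (ENNReal.ofReal l) ^ (1/(m:ℝ))) := hcalc
    _ ≤ (((m : ℕ) : ℝ≥0∞) + 1) * ∫⁻ l in Set.Ioi (0:ℝ), ν (U l) := mul_le_mul_right hlow _
    _ = (((m : ℕ) : ℝ≥0∞) + 1) * ∫⁻ ρ in Set.Ioo a b, (φ ρ) ^ m * g ρ := by rw [hswap]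

lemma nop_lower (n : ℕ) (α s : ℝ) (hs : 1 < s) (σ : Measure (En n))
    (x y : En n) (r R : ℝ) (hr : 0 < r) (hrR : r < R) (hyx : dist y x < r/2)
    (G : En n → ℝ≥0∞) (c : ℝ → ℝ≥0∞)
    (hG : ∀ ρ ∈ Set.Ioo r R, ∀ z ∈ Metric.ball x (ρ/2), c ρ ≤ G z) :
    (∫⁻ ρ in Set.Ioo r R, c ρ *
       ((σ (Metric.ball x (ρ/2)) / ENNReal.ofReal (ρ ^ ((n:ℝ) - α*s))) ^ (1/(s-1))
         * ENNReal.ofReal ρ⁻¹))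
      ≤ Nop n α s σ G y := by
  have hs1 : (0:ℝ) < s - 1 := by linarith
  have ht0 : (0:ℝ) ≤ 1/(s-1) := by positivity
  have hst : (s - 1) * (1/(s-1)) = 1 := by field_simp
  rw [Nop]
  have hsub : Set.Ioo r R ⊆ Set.Ioi (0:ℝ) := fun ρ hρ => hr.trans hρ.1
  refine le_trans ?_ (lintegral_mono_set hsub)
  refine setLIntegral_mono' measurableSet_Ioo fun ρ hρ => ?_
  have hρ0 : 0 < ρ := hr.trans hρ.1
  have hball : Metric.ball x (ρ/2) ⊆ Metric.ball y ρ := by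
    intro z hz
    rw [mem_ball] at hz ⊢
    have h1 : dist z y ≤ dist z x + dist x y := dist_triangle z x y
    have h2 : dist x y = dist y x := dist_comm x y
    have h3 : r/2 < ρ/2 := by linarith [hρ.1]
    linarith
  have hinner : (c ρ) ^ (s-1) * σ (Metric.ball x (ρ/2))
      ≤ ∫⁻ z in Metric.ball y ρ, (G z) ^ (s-1) ∂σ := by
    calc (c ρ) ^ (s-1) * σ (Metric.ball x (ρ/2))
        = ∫⁻ _ in Metric.ball x (ρ/2), (c ρ) ^ (s-1) ∂σ := (setLIntegral_const _ _).symm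
      _ ≤ ∫⁻ z in Metric.ball x (ρ/2), (G z) ^ (s-1) ∂σ :=
          setLIntegral_mono' measurableSet_ball fun z hz =>
            ENNReal.rpow_le_rpow (hG ρ hρ z hz) hs1.le
      _ ≤ ∫⁻ z in Metric.ball y ρ, (G z) ^ (s-1) ∂σ := lintegral_mono_set hball
  have hAD : ENNReal.ofReal (ρ ^ (α*s - (n:ℝ)))
      = (ENNReal.ofReal (ρ ^ ((n:ℝ) - α*s)))⁻¹ := by
    rw [show α*s - (n:ℝ) = -((n:ℝ) - α*s) by ring, Real.rpow_neg hρ0.le,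
      ENNReal.ofReal_inv_of_pos (Real.rpow_pos_of_pos hρ0 _)]
  have hkey : c ρ * ((σ (Metric.ball x (ρ/2)) / ENNReal.ofReal (ρ ^ ((n:ℝ) - α*s))) ^ (1/(s-1)))
      = (ENNReal.ofReal (ρ ^ (α*s - (n:ℝ))) * ((c ρ) ^ (s-1) * σ (Metric.ball x (ρ/2))))
          ^ (1/(s-1)) := by
    rw [hAD, div_eq_mul_inv]
    rw [ENNReal.mul_rpow_of_nonneg _ _ ht0, ENNReal.mul_rpow_of_nonneg _ _ ht0,
      ENNReal.mul_rpow_of_nonneg _ _ ht0]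
    rw [← ENNReal.rpow_mul (c ρ), hst, ENNReal.rpow_one]
    ring
  calc c ρ * ((σ (Metric.ball x (ρ/2)) / ENNReal.ofReal (ρ ^ ((n:ℝ) - α*s))) ^ (1/(s-1))
        * ENNReal.ofReal ρ⁻¹)
      = (c ρ * (σ (Metric.ball x (ρ/2)) / ENNReal.ofReal (ρ ^ ((n:ℝ) - α*s))) ^ (1/(s-1)))
        * ENNReal.ofReal ρ⁻¹ := (mul_assoc _ _ _).symm
    _ = (ENNReal.ofReal (ρ ^ (α*s - (n:ℝ))) * ((c ρ) ^ (s-1) * σ (Metric.ball x (ρ/2))))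
          ^ (1/(s-1)) * ENNReal.ofReal ρ⁻¹ := by rw [hkey]
    _ ≤ (ENNReal.ofReal (ρ ^ (α*s - (n:ℝ))) * ∫⁻ z in Metric.ball y ρ, (G z) ^ (s-1) ∂σ)
          ^ (1/(s-1)) * ENNReal.ofReal ρ⁻¹ :=
        mul_le_mul_left (ENNReal.rpow_le_rpow (mul_le_mul_right hinner _) ht0) _

/-- Lemma `greenlowbd2`: with `f(y) = |y-x₀|^{(αs-n)/(s-1)}`, for every `m ≥ 1`
and `x ≠ x₀`:
`𝒩^m(f)(x) ≥ (3/2)^{(αs-n)/(s-1)} (1/m!) |x-x₀|^{(αs-n)/(s-1)}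
  (∫_0^{|x-x₀|} (σ(B(x,r/2))/r^{n-αs})^{1/(s-1)} dr/r)^m`. -/
theorem statement9 (n : ℕ) (hn : 2 ≤ n) (α s : ℝ) (hs : 1 < s) (hα : 0 < α)
    (hαs : α * s < n)
    (σ : Measure (En n)) [IsLocallyFiniteMeasure σ]
    (x₀ x : En n) (hx : x ≠ x₀) (m : ℕ) (hm : 1 ≤ m) :
    ENNReal.ofReal (((3:ℝ)/2) ^ ((α*s-(n:ℝ))/(s-1)))
        * ((m.factorial : ℝ≥0∞))⁻¹
        * (ENNReal.ofReal ‖x - x₀‖) ^ ((α*s-(n:ℝ))/(s-1))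
        * (∫⁻ r in Set.Ioo (0:ℝ) ‖x - x₀‖,
            (σ (Metric.ball x (r/2)) / ENNReal.ofReal (r ^ ((n:ℝ) - α*s))) ^ (1/(s-1))
              * ENNReal.ofReal r⁻¹) ^ m
      ≤ (Nop n α s σ)^[m]
          (fun y => (ENNReal.ofReal ‖y - x₀‖) ^ ((α*s-(n:ℝ))/(s-1))) x := by
  obtain ⟨k, rfl⟩ : ∃ k, m = k + 1 := ⟨m - 1, (Nat.succ_pred_eq_of_pos hm).symm⟩
  have hs1 : (0:ℝ) < s - 1 := by linarith
  set β : ℝ := (α*s - (n:ℝ))/(s-1) with hβ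
  have hβneg : β < 0 := div_neg_of_neg_of_pos (by linarith) hs1
  set R : ℝ := ‖x - x₀‖ with hR
  have hR0 : 0 < R := by
    rw [hR]
    exact norm_pos_iff.2 (sub_ne_zero_of_ne hx)
  set f : En n → ℝ≥0∞ := fun y => (ENNReal.ofReal ‖y - x₀‖) ^ β with hf
  set g : ℝ → ℝ≥0∞ := fun ρ =>
    (σ (Metric.ball x (ρ/2)) / ENNReal.ofReal (ρ ^ ((n:ℝ) - α*s))) ^ (1/(s-1))
      * ENNReal.ofReal ρ⁻¹ with hg
  set C : ℝ≥0∞ := ENNReal.ofReal ((3/2*R) ^ β) with hC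
  have hCt : C ≠ ⊤ := ENNReal.ofReal_ne_top
  have hgm : Measurable g := by
    have h1 : Monotone fun ρ : ℝ => σ (Metric.ball x (ρ/2)) := fun u v huv =>
      measure_mono (Metric.ball_subset_ball (by linarith))
    have h2 : Measurable fun ρ : ℝ => ENNReal.ofReal (ρ ^ ((n:ℝ) - α*s)) :=
      (measurable_id.pow_const ((n:ℝ) - α*s)).ennreal_ofReal
    exact (((h1.measurable.div h2).pow_const (1/(s-1))).mul
      (measurable_inv.ennreal_ofReal))
  set φ : ℝ → ℝ≥0∞ := fun r => ∫⁻ ρ in Set.Ioo r R, g ρ with hφ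
  -- main induction
  have Q : ∀ k : ℕ, ∀ y : En n, ∀ r : ℝ, 0 < r → r < R → dist y x < r/2 →
      C * ((((k+1).factorial : ℕ) : ℝ≥0∞))⁻¹ * (φ r) ^ (k+1)
        ≤ (Nop n α s σ)^[k+1] f y := by
    intro k
    induction k with
    | zero =>
      intro y r hr hrR hy
      rw [Function.iterate_one]
      have hfB : ∀ ρ ∈ Set.Ioo r R, ∀ z ∈ Metric.ball x (ρ/2), C ≤ f z := by
        intro ρ hρ z hz
        have hz2 : ‖z - x‖ < ρ/2 := by
          rw [← dist_eq_norm]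
          exact mem_ball.1 hz
        have hz1 : ‖z - x₀‖ < 3/2*R := by
          have h1 : ‖z - x₀‖ ≤ ‖z - x‖ + ‖x - x₀‖ := by
            rw [show z - x₀ = (z - x) + (x - x₀) by abel]
            exact norm_add_le _ _
          rw [← hR] at h1
          have h3 : ρ/2 < R/2 := by linarith [hρ.2]
          linarith
        have hle : ENNReal.ofReal ‖z - x₀‖ ≤ ENNReal.ofReal (3/2*R) :=
          ENNReal.ofReal_le_ofReal hz1.le
        have h4 : (ENNReal.ofReal (3/2*R)) ^ β ≤ (ENNReal.ofReal ‖z - x₀‖) ^ β := by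
          have e : ∀ w : ℝ≥0∞, w ^ β = (w ^ (-β))⁻¹ := fun w => by
            rw [← ENNReal.rpow_neg, neg_neg]
          rw [e, e]
          exact ENNReal.inv_le_inv.2 (ENNReal.rpow_le_rpow hle (neg_nonneg.2 hβneg.le))
        calc C = (ENNReal.ofReal (3/2*R)) ^ β := by
              rw [hC, ← ENNReal.ofReal_rpow_of_pos (by positivity)]
          _ ≤ (ENNReal.ofReal ‖z - x₀‖) ^ β := h4
          _ = f z := rfl
      refine le_trans ?_ (nop_lower n α s hs σ x y r R hr hrR hy f (fun _ => C) hfB)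
      rw [lintegral_const_mul' _ _ hCt]
      have hgoal : C * ((((0+1).factorial : ℕ) : ℝ≥0∞))⁻¹ * (φ r) ^ (0+1) = C * φ r := by
        norm_num
      rw [hgoal]
    | succ k ih =>
      intro y r hr hrR hy
      rw [Function.iterate_succ_apply']
      have hB : ∀ ρ ∈ Set.Ioo r R, ∀ z ∈ Metric.ball x (ρ/2),
          C * ((((k+1).factorial : ℕ) : ℝ≥0∞))⁻¹ * (φ ρ) ^ (k+1)
            ≤ (Nop n α s σ)^[k+1] f z := by
        intro ρ hρ z hz
        exact ih z ρ (hr.trans hρ.1) hρ.2 (mem_ball.1 hz)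
      refine le_trans ?_ (nop_lower n α s hs σ x y r R hr hrR hy _ _ hB)
      have hfact : (((k+1).factorial : ℕ) : ℝ≥0∞) ≠ 0 := by
        exact_mod_cast (Nat.factorial_pos (k+1)).ne'
      have hconst : (C * ((((k+1).factorial : ℕ) : ℝ≥0∞))⁻¹) ≠ ⊤ :=
        ENNReal.mul_ne_top hCt (ENNReal.inv_ne_top.2 hfact)
      have heq : (∫⁻ ρ in Set.Ioo r R,
            (C * ((((k+1).factorial : ℕ) : ℝ≥0∞))⁻¹ * (φ ρ) ^ (k+1)) * g ρ)
          = (C * ((((k+1).factorial : ℕ) : ℝ≥0∞))⁻¹)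
              * ∫⁻ ρ in Set.Ioo r R, (φ ρ) ^ (k+1) * g ρ := by
        rw [← lintegral_const_mul' _ _ hconst]
        exact lintegral_congr fun ρ => by ring
      rw [heq]
      have hkc : (φ r) ^ (k+2)
          ≤ (((k+1 : ℕ) : ℝ≥0∞) + 1) * ∫⁻ ρ in Set.Ioo r R, (φ ρ) ^ (k+1) * g ρ :=
        key_calc g hgm r R (k+1) (Nat.succ_ne_zero k)
      have hK : (((k+1 : ℕ) : ℝ≥0∞) + 1) = (((k+2 : ℕ) : ℝ≥0∞)) := by push_cast; ring
      have hKne : (((k+2 : ℕ) : ℝ≥0∞)) ≠ 0 := by exact_mod_cast (Nat.succ_ne_zero (k+1))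
      have hKnt : (((k+2 : ℕ) : ℝ≥0∞)) ≠ ⊤ := ENNReal.natCast_ne_top _
      have hI : (((k+2 : ℕ) : ℝ≥0∞))⁻¹ * (φ r) ^ (k+2)
          ≤ ∫⁻ ρ in Set.Ioo r R, (φ ρ) ^ (k+1) * g ρ := by
        rw [hK] at hkc
        calc (((k+2 : ℕ) : ℝ≥0∞))⁻¹ * (φ r) ^ (k+2)
            ≤ (((k+2 : ℕ) : ℝ≥0∞))⁻¹ * ((((k+2 : ℕ) : ℝ≥0∞))
                * ∫⁻ ρ in Set.Ioo r R, (φ ρ) ^ (k+1) * g ρ) := mul_le_mul_right hkc _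
          _ = ∫⁻ ρ in Set.Ioo r R, (φ ρ) ^ (k+1) * g ρ := by
              rw [← mul_assoc, ENNReal.inv_mul_cancel hKne hKnt, one_mul]
      have hfs : (((k+2).factorial : ℕ) : ℝ≥0∞)⁻¹
          = ((((k+1).factorial : ℕ) : ℝ≥0∞))⁻¹ * (((k+2 : ℕ) : ℝ≥0∞))⁻¹ := by
        have h1 : ((k+2).factorial : ℕ) = (k+2) * (k+1).factorial := Nat.factorial_succ (k+1)
        rw [h1, Nat.cast_mul, ENNReal.mul_inv (Or.inl hKne) (Or.inl hKnt)]
        ring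
      calc C * ((((k+2).factorial : ℕ) : ℝ≥0∞))⁻¹ * (φ r) ^ (k+2)
          = (C * ((((k+1).factorial : ℕ) : ℝ≥0∞))⁻¹)
              * ((((k+2 : ℕ) : ℝ≥0∞))⁻¹ * (φ r) ^ (k+2)) := by
            rw [hfs]; ring
        _ ≤ (C * ((((k+1).factorial : ℕ) : ℝ≥0∞))⁻¹)
              * ∫⁻ ρ in Set.Ioo r R, (φ ρ) ^ (k+1) * g ρ := mul_le_mul_right hI _
  -- assemble
  set rseq : ℕ → ℝ := fun j => R / (j + 2) with hrseq
  have hr1 : ∀ j : ℕ, 0 < rseq j := fun j => by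
    rw [hrseq]
    positivity
  have hr2 : ∀ j : ℕ, rseq j < R := fun j => by
    rw [hrseq]
    apply div_lt_self hR0
    have : (0:ℝ) ≤ (j:ℝ) := Nat.cast_nonneg j
    linarith
  have hUnion : (⋃ j : ℕ, Set.Ioo (rseq j) R) = Set.Ioo 0 R := by
    apply Set.Subset.antisymm
    · exact Set.iUnion_subset fun j => Set.Ioo_subset_Ioo_left (hr1 j).le
    · intro ρ hρ
      obtain ⟨j, hj⟩ := exists_nat_gt (R / ρ)
      refine Set.mem_iUnion.2 ⟨j, ?_, hρ.2⟩
      rw [hrseq]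
      rw [div_lt_iff₀ (by positivity)]
      have h1 : R / ρ < (j:ℝ) + 2 := by linarith
      rw [div_lt_iff₀ hρ.1] at h1
      linarith
  have hdir : Directed (· ⊆ ·) (fun j : ℕ => Set.Ioo (rseq j) R) := by
    refine Monotone.directed_le fun j j' hjj => Set.Ioo_subset_Ioo_left ?_
    rw [hrseq]
    apply div_le_div_of_nonneg_left hR0.le (by positivity)
    have : (j:ℝ) ≤ (j':ℝ) := by exact_mod_cast hjj
    linarith
  have hsup : (∫⁻ ρ in Set.Ioo (0:ℝ) R, g ρ) = ⨆ j : ℕ, φ (rseq j) := by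
    have h1 : ∀ u : ℝ, (∫⁻ ρ in Set.Ioo u R, g ρ) = (volume.withDensity g) (Set.Ioo u R) :=
      fun u => (withDensity_apply g measurableSet_Ioo).symm
    rw [h1, ← hUnion, Directed.measure_iUnion hdir]
    exact iSup_congr fun j => (h1 _).symm
  have hpow : (∫⁻ ρ in Set.Ioo (0:ℝ) R, g ρ) ^ (k+1) = ⨆ j : ℕ, (φ (rseq j)) ^ (k+1) := by
    rw [hsup]
    exact Monotone.map_iSup_of_continuousAt (f := fun z : ℝ≥0∞ => z ^ (k+1))
      (ENNReal.continuous_pow (k+1)).continuousAt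
      (fun u v h => pow_le_pow_left' h (k+1)) (by simp)
  have hCeq : ENNReal.ofReal (((3:ℝ)/2) ^ β) * (ENNReal.ofReal R) ^ β = C := by
    rw [hC, Real.mul_rpow (by norm_num) hR0.le, ENNReal.ofReal_mul (by positivity),
      ENNReal.ofReal_rpow_of_pos hR0]
  calc ENNReal.ofReal (((3:ℝ)/2) ^ β) * (((k+1).factorial : ℝ≥0∞))⁻¹
        * (ENNReal.ofReal R) ^ β * (∫⁻ ρ in Set.Ioo (0:ℝ) R, g ρ) ^ (k+1)
      = C * ((((k+1).factorial : ℕ) : ℝ≥0∞))⁻¹ * (∫⁻ ρ in Set.Ioo (0:ℝ) R, g ρ) ^ (k+1) := by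
        rw [← hCeq]; ring
    _ = ⨆ j : ℕ, C * ((((k+1).factorial : ℕ) : ℝ≥0∞))⁻¹ * (φ (rseq j)) ^ (k+1) := by
        rw [hpow, ENNReal.mul_iSup]
    _ ≤ (Nop n α s σ)^[k+1] f x := by
        refine iSup_le fun j => ?_
        refine Q k x (rseq j) (hr1 j) (hr2 j) ?_
        rw [dist_self]
        exact half_pos (hr1 j)
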